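/- Nesting of bipartite matchings: let A = {a₁,…,a_m} and B = {b₁,…,b_n} be the parts of a complete bipartite graph with nonnegative edge costs, and let M be a minimum cost (k-1)-matching on the induced subgraph with parts A and B∖{b_n}. Then there exists a minimum cost k-matching N on the full graph such that every vertex of A matched by M is also matched by N; consequently N matches exactly one vertex of A not matched by M. -/

import Mathlib

set_option linter.unusedSectionVars false
set_option linter.unusedVariables false
set_option maxHeartbeats 1600000

namespace MatchNest

variable {α β : Type*} [DecidableEq α] [DecidableEq β]

/-- matching property -/
def IsM (M : Finset (α × β)) : Prop := ∀ e ∈ M, ∀ f ∈ M, e ≠ f → e.1 ≠ f.1 ∧ e.2 ≠ f.2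

lemma IsM.inj1 {M : Finset (α × β)} (h : IsM M) {x : α} {b b' : β}
    (h1 : (x, b) ∈ M) (h2 : (x, b') ∈ M) : b = b' := by
  by_contra hne
  exact (h _ h1 _ h2 (by simp [Prod.ext_iff, hne])).1 rfl

lemma IsM.inj2 {M : Finset (α × β)} (h : IsM M) {x x' : α} {b : β}
    (h1 : (x, b) ∈ M) (h2 : (x', b) ∈ M) : x = x' := by
  by_contra hne
  exact (h _ h1 _ h2 (by simp [Prod.ext_iff, hne])).2 rfl

lemma IsM.card_image_fst {M : Finset (α × β)} (h : IsM M) :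
    (M.image Prod.fst).card = M.card := by
  apply Finset.card_image_of_injOn
  intro e he f hf hef
  by_contra hne
  exact (h _ he _ hf hne).1 hef

/-- one step of the alternating structure: `x`'s `M`-edge shares its `B`-endpoint with
`y`'s `N`-edge. -/
def GStep (M N : Finset (α × β)) (x y : α) : Prop := ∃ b, (x, b) ∈ M ∧ (y, b) ∈ N

lemma gstep_fn {M N : Finset (α × β)} (hM : IsM M) (hN : IsM N) {x y y' : α}
    (h1 : GStep M N x y) (h2 : GStep M N x y') : y = y' := by
  obtain ⟨b, hb1, hb2⟩ := h1
  obtain ⟨b', hb1', hb2'⟩ := h2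
  cases hM.inj1 hb1 hb1'
  exact hN.inj2 hb2 hb2'

lemma gstep_inj {M N : Finset (α × β)} (hM : IsM M) (hN : IsM N) {x x' y : α}
    (h1 : GStep M N x y) (h2 : GStep M N x' y) : x = x' := by
  obtain ⟨b, hb1, hb2⟩ := h1
  obtain ⟨b', hb1', hb2'⟩ := h2
  cases hN.inj1 hb2 hb2'
  exact hM.inj2 hb1 hb1'

def Closed (M N : Finset (α × β)) (S : Set α) : Prop :=
  ∀ ⦃x⦄, x ∈ S → ∀ ⦃y⦄, GStep M N x y → y ∈ S

def orbit (M N : Finset (α × β)) (a : α) : Set α := ⋂₀ {T | a ∈ T ∧ Closed M N T}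

lemma mem_orbit_self (M N : Finset (α × β)) (a : α) : a ∈ orbit M N a :=
  fun _ hT => hT.1

lemma orbit_closed (M N : Finset (α × β)) (a : α) : Closed M N (orbit M N a) :=
  fun x hx y hy T hT => hT.2 (hx T hT) hy

lemma orbit_subset {M N : Finset (α × β)} {a : α} {T : Set α} (h : a ∈ T)
    (hT : Closed M N T) : orbit M N a ⊆ T :=
  fun _ hx => hx T ⟨h, hT⟩

lemma orbit_pred {M N : Finset (α × β)} {a x : α} (hx : x ∈ orbit M N a) :
    x = a ∨ ∃ p ∈ orbit M N a, GStep M N p x := by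
  have hsub : orbit M N a ⊆ {x | x ∈ orbit M N a ∧ (x = a ∨ ∃ p ∈ orbit M N a, GStep M N p x)} := by
    apply orbit_subset
    · exact ⟨mem_orbit_self M N a, Or.inl rfl⟩
    · intro x hx y hy
      exact ⟨orbit_closed M N a hx.1 hy, Or.inr ⟨x, hx.1, hy⟩⟩
  exact (hsub hx).2

def NoPred (M N : Finset (α × β)) (x : α) : Prop := ∀ p, ¬ GStep M N p x

lemma not_mem_orbit {M N : Finset (α × β)} {a w : α} (hw : NoPred M N w)
    (hne : w ≠ a) : w ∉ orbit M N a := by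
  intro h
  rcases orbit_pred h with h | ⟨p, _, hp⟩
  · exact hne h
  · exact hw p hp

lemma orbit_disjoint {M N : Finset (α × β)} (hM : IsM M) (hN : IsM N) {a w : α}
    (ha : NoPred M N a) (hw : NoPred M N w) (hne : a ≠ w) :
    ∀ x, x ∈ orbit M N a → x ∉ orbit M N w := by
  have haw : a ∉ orbit M N w := not_mem_orbit ha hne
  have : orbit M N a ⊆ {x | x ∈ orbit M N a ∧ x ∉ orbit M N w} := by
    apply orbit_subset
    · exact ⟨mem_orbit_self M N a, haw⟩
    intro x hx y hy
    refine ⟨orbit_closed M N a hx.1 hy, fun hyw => ?_⟩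
    rcases orbit_pred hyw with rfl | ⟨p, hpw, hp⟩
    · exact hw x hy
    · exact hx.2 (gstep_inj hM hN hp hy ▸ hpw)
  exact fun x hx => (this hx).2


lemma exists_terminal [Fintype α] {M N : Finset (α × β)} (hM : IsM M) (hN : IsM N)
    {a : α} (ha : NoPred M N a) :
    ∃ z ∈ orbit M N a, (∀ y, ¬ GStep M N z y) ∧
      ∀ x ∈ orbit M N a, x ≠ z → ∃ y, GStep M N x y := by
  classical
  set O : Finset α := (Set.toFinite (orbit M N a)).toFinset with hO
  have hmemO : ∀ x, x ∈ O ↔ x ∈ orbit M N a := fun x => Set.Finite.mem_toFinset _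
  have haO : a ∈ O := (hmemO a).2 (mem_orbit_self M N a)
  set D : Finset α := O.filter (fun x => ∃ y, GStep M N x y) with hD
  have hcard : D.card = (O.erase a).card := by
    apply Finset.card_bij (fun x hx => Classical.choose ((Finset.mem_filter.1 hx).2))
    · intro x hx
      have hs := Classical.choose_spec ((Finset.mem_filter.1 hx).2)
      rw [Finset.mem_erase]
      constructor
      · intro h; exact ha x (h ▸ hs)
      · exact (hmemO _).2 (orbit_closed M N a ((hmemO x).1 (Finset.mem_filter.1 hx).1) hs)
    · intro x hx x' hx' heq
      have hs := Classical.choose_spec ((Finset.mem_filter.1 hx).2)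
      have hs' := Classical.choose_spec ((Finset.mem_filter.1 hx').2)
      exact gstep_inj hM hN hs (heq ▸ hs')
    · intro y hy
      obtain ⟨hya, hyO⟩ := Finset.mem_erase.1 hy
      rcases orbit_pred ((hmemO y).1 hyO) with rfl | ⟨p, hp, hstep⟩
      · exact absurd rfl hya
      · have hpD : p ∈ D := Finset.mem_filter.2 ⟨(hmemO p).2 hp, ⟨y, hstep⟩⟩
        refine ⟨p, hpD, ?_⟩
        have hs := Classical.choose_spec ((Finset.mem_filter.1 hpD).2)
        exact gstep_fn hM hN hs hstep
  have hsplit : D.card + (O.filter (fun x => ¬ ∃ y, GStep M N x y)).card = O.card :=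
    Finset.card_filter_add_card_filter_not (s := O) (p := fun x => ∃ y, GStep M N x y)
  have hDcard : D.card = O.card - 1 := by rw [hcard, Finset.card_erase_of_mem haO]
  have hOpos : 1 ≤ O.card := Finset.card_pos.2 ⟨a, haO⟩
  have h1 : (O.filter (fun x => ¬ ∃ y, GStep M N x y)).card = 1 := by
    omega
  obtain ⟨z, hz⟩ := Finset.card_eq_one.1 h1
  have hzmem : z ∈ O.filter (fun x => ¬ ∃ y, GStep M N x y) := hz ▸ Finset.mem_singleton_self z
  obtain ⟨hzO, hzno⟩ := Finset.mem_filter.1 hzmem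
  refine ⟨z, (hmemO z).1 hzO, fun y hy => hzno ⟨y, hy⟩, fun x hx hxz => ?_⟩
  by_contra hno
  have : x ∈ O.filter (fun x => ¬ ∃ y, GStep M N x y) := Finset.mem_filter.2 ⟨(hmemO x).2 hx, hno⟩
  rw [hz, Finset.mem_singleton] at this
  exact hxz this


open Classical in
lemma card_filter_fst {N : Finset (α × β)} (hN : IsM N) (S : Finset α) :
    (N.filter fun e => e.1 ∈ S).card = (S.filter fun x => ∃ b, (x, b) ∈ N).card := by
  classical
  apply Finset.card_bij (fun e _ => e.1)
  · intro e he
    obtain ⟨heN, heS⟩ := Finset.mem_filter.1 he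
    exact Finset.mem_filter.2 ⟨heS, ⟨e.2, Prod.mk.eta ▸ heN⟩⟩
  · intro e he f hf heq
    by_contra hne
    exact (hN _ (Finset.mem_filter.1 he).1 _ (Finset.mem_filter.1 hf).1 hne).1 heq
  · intro x hx
    obtain ⟨hxS, b, hb⟩ := Finset.mem_filter.1 hx
    exact ⟨(x, b), Finset.mem_filter.2 ⟨hb, hxS⟩, rfl⟩

lemma exists_good_S [Fintype α] {M N : Finset (α × β)} {Q : β → Prop} {a : α}
    (hM : IsM M) (hN : IsM N) (hcards : N.card = M.card + 1)
    (haM : a ∈ M.image Prod.fst) (haN : a ∉ N.image Prod.fst)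
    (hQM : ∀ e ∈ M, Q e.2)
    (hQ1 : ∀ b b' : β, ¬ Q b → ¬ Q b' → b = b') :
    ∃ S : Finset α, a ∈ S ∧
      (∀ x ∈ S, ∀ (y : α) (b : β), (x, b) ∈ M → (y, b) ∈ N → y ∈ S) ∧
      (∀ x ∈ S, ∀ b : β, (x, b) ∈ N →
        (∃ p ∈ S, (p, b) ∈ M) ∨ ((∀ p, (p, b) ∉ M) ∧ Q b)) ∧
      (N.filter fun e => e.1 ∈ S).card = (M.filter fun e => e.1 ∈ S).card := by
  classical
  have hPa : NoPred M N a := by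
    rintro p ⟨b, hbM, hbN⟩
    exact haN (Finset.mem_image.2 ⟨(a, b), hbN, rfl⟩)
  obtain ⟨z, hzorb, hzno, hzdom⟩ := exists_terminal hM hN hPa
  -- the finset version of the orbit of a
  set Oa : Finset α := (Set.toFinite (orbit M N a)).toFinset with hOa
  have hmemOa : ∀ x, x ∈ Oa ↔ x ∈ orbit M N a := fun x => Set.Finite.mem_toFinset _
  have haOa : a ∈ Oa := (hmemOa a).2 (mem_orbit_self M N a)
  have hzOa : z ∈ Oa := (hmemOa z).2 hzorb
  -- membership facts
  have hNmemOa : ∀ x ∈ Oa, x ≠ a → ∃ b, (x, b) ∈ N := by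
    intro x hx hxa
    rcases orbit_pred ((hmemOa x).1 hx) with rfl | ⟨p, hp, b, hbM, hbN⟩
    · exact absurd rfl hxa
    · exact ⟨b, hbN⟩
  have hMdomOa : ∀ x ∈ Oa, x ≠ z → ∃ b, (x, b) ∈ M := by
    intro x hx hxz
    obtain ⟨y, b, hbM, hbN⟩ := hzdom x ((hmemOa x).1 hx) hxz
    exact ⟨b, hbM⟩
  have haNo : ∀ b, (a, b) ∉ N := by
    intro b hb
    exact haN (Finset.mem_image.2 ⟨(a, b), hb, rfl⟩)
  by_cases hzM : ∃ b, (z, b) ∈ M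
  · -- case T2
    obtain ⟨bz, hbz⟩ := hzM
    have hzbN : ∀ q, (q, bz) ∉ N := fun q hq => hzno q ⟨bz, hbz, hq⟩
    set P : Finset (α × β) := N.filter (fun e => (¬ ∃ p, (p, e.2) ∈ M) ∧ Q e.2) with hP
    set MT : Finset (α × β) := M.filter (fun f => ¬ ∃ q, (q, f.2) ∈ N) with hMT
    set MS : Finset (α × β) := M.filter (fun f => ∃ q, (q, f.2) ∈ N) with hMS
    have hMTz : (z, bz) ∈ MT := Finset.mem_filter.2 ⟨hbz, fun ⟨q, hq⟩ => hzbN q hq⟩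
    have hPstart : ∀ e ∈ P, NoPred M N e.1 := by
      intro e he p ⟨b, hbM, hbN⟩
      have heN : (e.1, e.2) ∈ N := Prod.mk.eta ▸ (Finset.mem_filter.1 he).1
      cases hN.inj1 hbN heN
      exact (Finset.mem_filter.1 he).2.1 ⟨p, hbM⟩
    have hane : ∀ e ∈ P, a ≠ e.1 := by
      intro e he h
      exact haNo e.2 (by rw [h]; exact Prod.mk.eta ▸ (Finset.mem_filter.1 he).1)
    -- counting: MT.card ≤ P.card
    have hsplit1 : (N.filter (fun e => ∃ p, (p, e.2) ∈ M)).card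
        + (N.filter (fun e => ¬ ∃ p, (p, e.2) ∈ M)).card = N.card :=
      Finset.card_filter_add_card_filter_not (s := N) (p := fun e => ∃ p, (p, e.2) ∈ M)
    set Nrest : Finset (α × β) := N.filter (fun e => ¬ ∃ p, (p, e.2) ∈ M) with hNrest
    have hsplit2 : (Nrest.filter (fun e => Q e.2)).card
        + (Nrest.filter (fun e => ¬ Q e.2)).card = Nrest.card :=
      Finset.card_filter_add_card_filter_not (s := Nrest) (p := fun e => Q e.2)
    have hPeq : Nrest.filter (fun e => Q e.2) = P := by
      rw [hNrest, Finset.filter_filter]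
    have hN2 : (Nrest.filter (fun e => ¬ Q e.2)).card ≤ 1 := by
      apply Finset.card_le_one.2
      intro e he f hf
      have heN : (e.1, e.2) ∈ N := Prod.mk.eta ▸ (Finset.mem_filter.1 (Finset.mem_filter.1 he).1).1
      have hfN : (f.1, f.2) ∈ N := Prod.mk.eta ▸ (Finset.mem_filter.1 (Finset.mem_filter.1 hf).1).1
      have h2 : e.2 = f.2 := hQ1 _ _ (Finset.mem_filter.1 he).2 (Finset.mem_filter.1 hf).2
      have h1 : e.1 = f.1 := hN.inj2 (h2 ▸ heN) hfN
      exact Prod.ext h1 h2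
    have hsplit3 : MS.card + MT.card = M.card :=
      Finset.card_filter_add_card_filter_not (s := M) (p := fun f => ∃ q, (q, f.2) ∈ N)
    have hN1 : (N.filter (fun e => ∃ p, (p, e.2) ∈ M)).card ≤ MS.card := by
      apply Finset.card_le_card_of_injOn
        (fun e => if h : ∃ p, (p, e.2) ∈ M then (h.choose, e.2) else e)
      · intro e he
        obtain ⟨heN, hex⟩ := Finset.mem_filter.1 he
        dsimp only; rw [dif_pos hex]
        exact Finset.mem_filter.2 ⟨hex.choose_spec, ⟨e.1, Prod.mk.eta ▸ heN⟩⟩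
      · intro e he e' he' heq
        obtain ⟨heN, hex⟩ := Finset.mem_filter.1 he
        obtain ⟨heN', hex'⟩ := Finset.mem_filter.1 he'
        simp only [dif_pos hex, dif_pos hex'] at heq
        have h2 : e.2 = e'.2 := by simpa using congrArg Prod.snd heq
        have heN2 : (e.1, e'.2) ∈ N := by rw [← h2]; simpa using heN
        have heN2' : (e'.1, e'.2) ∈ N := by simpa using heN'
        exact Prod.ext (hN.inj2 heN2 heN2') h2
    have hPcard : (Nrest.filter (fun e => Q e.2)).card = P.card := by rw [hPeq]
    have hPMT : MT.card ≤ P.card := by omega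
    have hMT1 : 1 ≤ MT.card := Finset.card_pos.2 ⟨(z, bz), hMTz⟩
    -- existence of a good start
    have hgood : ∃ e ∈ P, ∃ z', z' ∈ orbit M N e.1 ∧ (∀ y, ¬ GStep M N z' y) ∧
        (∀ x ∈ orbit M N e.1, x ≠ z' → ∃ y, GStep M N x y) ∧ ¬ ∃ b, (z', b) ∈ M := by
      by_contra hbad
      push_neg at hbad
      have hchoice : ∀ e ∈ P, ∃ zb : α × β,
          zb.1 ∈ orbit M N e.1 ∧ (∀ y, ¬ GStep M N zb.1 y) ∧ zb ∈ M := by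
        intro e he
        obtain ⟨z', h1, h2, h3⟩ := exists_terminal hM hN (hPstart e he)
        obtain ⟨b, hb⟩ := hbad e he z' h1 h2 h3
        exact ⟨(z', b), h1, h2, hb⟩
      have hfex : ∀ e ∈ P, ∀ (h : ∃ zb : α × β,
          zb.1 ∈ orbit M N e.1 ∧ (∀ y, ¬ GStep M N zb.1 y) ∧ zb ∈ M),
          h.choose.1 ∈ orbit M N e.1 ∧ (∀ y, ¬ GStep M N h.choose.1 y) ∧ h.choose ∈ M :=
        fun e he h => h.choose_spec
      set f : α × β → α × β := fun e =>
        if h : ∃ zb : α × β, zb.1 ∈ orbit M N e.1 ∧ (∀ y, ¬ GStep M N zb.1 y) ∧ zb ∈ M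
        then h.choose else e with hfdef
      have hfspec : ∀ e ∈ P, (f e).1 ∈ orbit M N e.1 ∧ (∀ y, ¬ GStep M N (f e).1 y)
          ∧ f e ∈ M := by
        intro e he
        have h := hchoice e he
        simp only [hfdef, dif_pos h]
        exact h.choose_spec
      have hcardle : P.card ≤ (MT.erase (z, bz)).card := by
        apply Finset.card_le_card_of_injOn f
        · intro e he
          obtain ⟨horb, hno, hMmem⟩ := hfspec e he
          have hMT' : f e ∈ MT := by
            refine Finset.mem_filter.2 ⟨hMmem, ?_⟩
            rintro ⟨q, hq⟩
            exact hno q ⟨(f e).2, Prod.mk.eta ▸ hMmem, hq⟩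
          refine Finset.mem_erase.2 ⟨?_, hMT'⟩
          intro hfe
          have : z ∉ orbit M N e.1 :=
            orbit_disjoint hM hN hPa (hPstart e he) (hane e he) z hzorb
          rw [hfe] at horb
          exact this horb
        · intro e he e' he' heq
          obtain ⟨horb, _, _⟩ := hfspec e he
          obtain ⟨horb', _, _⟩ := hfspec e' he'
          by_cases h1 : e.1 = e'.1
          · have heN : (e.1, e.2) ∈ N := Prod.mk.eta ▸ (Finset.mem_filter.1 he).1
            have heN' : (e'.1, e'.2) ∈ N := Prod.mk.eta ▸ (Finset.mem_filter.1 he').1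
            exact Prod.ext h1 (hN.inj1 (h1 ▸ heN) heN')
          · exfalso
            have := orbit_disjoint hM hN (hPstart e he) (hPstart e' he') h1 (f e).1 horb
            rw [heq] at this
            exact this horb'
      rw [Finset.card_erase_of_mem hMTz] at hcardle
      omega
    obtain ⟨e, heP, z', hz'orb, hz'no, hz'dom, hz'M⟩ := hgood
    have hweN : (e.1, e.2) ∈ N := Prod.mk.eta ▸ (Finset.mem_filter.1 heP).1
    have hPw : NoPred M N e.1 := hPstart e heP
    have hawne : a ≠ e.1 := hane e heP
    set Ow : Finset α := (Set.toFinite (orbit M N e.1)).toFinset with hOw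
    have hmemOw : ∀ x, x ∈ Ow ↔ x ∈ orbit M N e.1 := fun x => Set.Finite.mem_toFinset _
    have hwOw : e.1 ∈ Ow := (hmemOw _).2 (mem_orbit_self M N e.1)
    have hz'Ow : z' ∈ Ow := (hmemOw _).2 hz'orb
    have hdisj : Disjoint Oa Ow := by
      rw [Finset.disjoint_left]
      intro x hx hx'
      exact orbit_disjoint hM hN hPa hPw hawne x ((hmemOa x).1 hx) ((hmemOw x).1 hx')
    refine ⟨Oa ∪ Ow, Finset.mem_union.2 (Or.inl haOa), ?_, ?_, ?_⟩
    · intro x hx y b hbM hbN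
      rcases Finset.mem_union.1 hx with hx' | hx'
      · exact Finset.mem_union.2 (Or.inl ((hmemOa y).2
          (orbit_closed M N a ((hmemOa x).1 hx') ⟨b, hbM, hbN⟩)))
      · exact Finset.mem_union.2 (Or.inr ((hmemOw y).2
          (orbit_closed M N e.1 ((hmemOw x).1 hx') ⟨b, hbM, hbN⟩)))
    · intro x hx b hbN
      rcases Finset.mem_union.1 hx with hx' | hx'
      · have hxa : x ≠ a := by rintro rfl; exact haNo b hbN
        rcases orbit_pred ((hmemOa x).1 hx') with rfl | ⟨p, hp, b', hbM', hbN'⟩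
        · exact absurd rfl hxa
        · exact Or.inl ⟨p, Finset.mem_union.2 (Or.inl ((hmemOa p).2 hp)),
            (hN.inj1 hbN' hbN) ▸ hbM'⟩
      · by_cases hxw : x = e.1
        · subst hxw
          have hb2 : b = e.2 := hN.inj1 hbN hweN
          subst hb2
          refine Or.inr ⟨?_, (Finset.mem_filter.1 heP).2.2⟩
          intro p hp
          exact (Finset.mem_filter.1 heP).2.1 ⟨p, hp⟩
        · rcases orbit_pred ((hmemOw x).1 hx') with h | ⟨p, hp, b', hbM', hbN'⟩
          · exact absurd h hxw
          · exact Or.inl ⟨p, Finset.mem_union.2 (Or.inr ((hmemOw p).2 hp)),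
              (hN.inj1 hbN' hbN) ▸ hbM'⟩
    · rw [card_filter_fst hN, card_filter_fst hM, Finset.filter_union, Finset.filter_union,
        Finset.card_union_of_disjoint (Finset.disjoint_filter_filter hdisj),
        Finset.card_union_of_disjoint (Finset.disjoint_filter_filter hdisj)]
      have h1 : Oa.filter (fun x => ∃ b, (x, b) ∈ N) = Oa.erase a := by
        ext x
        simp only [Finset.mem_filter, Finset.mem_erase]
        constructor
        · rintro ⟨hx, b, hb⟩
          exact ⟨fun h => haNo b (h ▸ hb), hx⟩
        · rintro ⟨hxa, hx⟩
          exact ⟨hx, hNmemOa x hx hxa⟩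
      have h2 : Oa.filter (fun x => ∃ b, (x, b) ∈ M) = Oa := by
        apply Finset.filter_true_of_mem
        intro x hx
        by_cases hxz : x = z
        · exact ⟨bz, hxz ▸ hbz⟩
        · exact hMdomOa x hx hxz
      have h3 : Ow.filter (fun x => ∃ b, (x, b) ∈ N) = Ow := by
        apply Finset.filter_true_of_mem
        intro x hx
        by_cases hxw : x = e.1
        · exact ⟨e.2, hxw ▸ hweN⟩
        · rcases orbit_pred ((hmemOw x).1 hx) with h | ⟨p, hp, b', hbM', hbN'⟩
          · exact absurd h hxw
          · exact ⟨b', hbN'⟩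
      have h4 : Ow.filter (fun x => ∃ b, (x, b) ∈ M) = Ow.erase z' := by
        ext x
        simp only [Finset.mem_filter, Finset.mem_erase]
        constructor
        · rintro ⟨hx, b, hb⟩
          exact ⟨fun h => hz'M ⟨b, h ▸ hb⟩, hx⟩
        · rintro ⟨hxz, hx⟩
          obtain ⟨y, b, hbM, hbN⟩ := hz'dom x ((hmemOw x).1 hx) hxz
          exact ⟨hx, b, hbM⟩
      rw [h1, h2, h3, h4, Finset.card_erase_of_mem haOa, Finset.card_erase_of_mem hz'Ow]
      have ha1 : 1 ≤ Oa.card := Finset.card_pos.2 ⟨a, haOa⟩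
      have hw1 : 1 ≤ Ow.card := Finset.card_pos.2 ⟨e.1, hwOw⟩
      omega
  · -- case T1 : S = Oa
    refine ⟨Oa, haOa, ?_, ?_, ?_⟩
    · intro x hx y b hbM hbN
      exact (hmemOa y).2 (orbit_closed M N a ((hmemOa x).1 hx) ⟨b, hbM, hbN⟩)
    · intro x hx b hbN
      have hxa : x ≠ a := by rintro rfl; exact haNo b hbN
      rcases orbit_pred ((hmemOa x).1 hx) with rfl | ⟨p, hp, b', hbM', hbN'⟩
      · exact absurd rfl hxa
      · left
        exact ⟨p, (hmemOa p).2 hp, (hN.inj1 hbN' hbN) ▸ hbM'⟩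
    · rw [card_filter_fst hN, card_filter_fst hM]
      have hza : z ≠ a := by
        rintro rfl
        obtain ⟨e, heM, hex⟩ := Finset.mem_image.1 haM
        exact hzM ⟨e.2, by rwa [← hex, Prod.mk.eta]⟩
      have h1 : Oa.filter (fun x => ∃ b, (x, b) ∈ N) = Oa.erase a := by
        ext x
        simp only [Finset.mem_filter, Finset.mem_erase]
        constructor
        · rintro ⟨hx, b, hb⟩
          exact ⟨fun h => haNo b (h ▸ hb), hx⟩
        · rintro ⟨hxa, hx⟩
          exact ⟨hx, hNmemOa x hx hxa⟩
      have h2 : Oa.filter (fun x => ∃ b, (x, b) ∈ M) = Oa.erase z := by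
        ext x
        simp only [Finset.mem_filter, Finset.mem_erase]
        constructor
        · rintro ⟨hx, b, hb⟩
          exact ⟨fun h => hzM ⟨b, h ▸ hb⟩, hx⟩
        · rintro ⟨hxz, hx⟩
          exact ⟨hx, hMdomOa x hx hxz⟩
      rw [h1, h2, Finset.card_erase_of_mem haOa, Finset.card_erase_of_mem hzOa]


lemma exchange (c : α × β → ℝ) (Q : β → Prop)
    (M N : Finset (α × β)) (S : Finset α)
    (hM : IsM M) (hN : IsM N)
    (hQM : ∀ e ∈ M, Q e.2)
    (hclosed : ∀ x ∈ S, ∀ (y : α) (b : β), (x, b) ∈ M → (y, b) ∈ N → y ∈ S)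
    (hpred : ∀ x ∈ S, ∀ b : β, (x, b) ∈ N →
      (∃ p ∈ S, (p, b) ∈ M) ∨ ((∀ p, (p, b) ∉ M) ∧ Q b))
    (hcard : (N.filter fun e => e.1 ∈ S).card = (M.filter fun e => e.1 ∈ S).card) :
    ∃ N' M' : Finset (α × β), IsM N' ∧ IsM M' ∧
      N'.card = N.card ∧ M'.card = M.card ∧
      (∀ e ∈ M', Q e.2) ∧
      (∑ e ∈ N', c e) + (∑ e ∈ M', c e) = (∑ e ∈ N, c e) + (∑ e ∈ M, c e) ∧
      (∀ x, x ∈ M.image Prod.fst → x ∈ N.image Prod.fst → x ∈ N'.image Prod.fst) ∧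
      (∀ x ∈ S, x ∈ M.image Prod.fst → x ∈ N'.image Prod.fst) := by
  classical
  set Non := N.filter (fun e => e.1 ∈ S) with hNon
  set Noff := N.filter (fun e => ¬ e.1 ∈ S) with hNoff
  set Mon := M.filter (fun e => e.1 ∈ S) with hMon
  set Moff := M.filter (fun e => ¬ e.1 ∈ S) with hMoff
  have hdis1 : Disjoint Noff Mon := by
    rw [Finset.disjoint_left]
    intro e he hf
    exact (Finset.mem_filter.1 he).2 (Finset.mem_filter.1 hf).2
  have hdis2 : Disjoint Moff Non := by
    rw [Finset.disjoint_left]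
    intro e he hf
    exact (Finset.mem_filter.1 he).2 (Finset.mem_filter.1 hf).2
  refine ⟨Noff ∪ Mon, Moff ∪ Non, ?_, ?_, ?_, ?_, ?_, ?_, ?_, ?_⟩
  · -- IsM N'
    intro e he f hf hne
    rcases Finset.mem_union.1 he with he' | he' <;> rcases Finset.mem_union.1 hf with hf' | hf'
    · exact hN _ (Finset.mem_filter.1 he').1 _ (Finset.mem_filter.1 hf').1 hne
    · obtain ⟨heN, heS⟩ := Finset.mem_filter.1 he'
      obtain ⟨hfM, hfS⟩ := Finset.mem_filter.1 hf'
      refine ⟨fun h => heS (h ▸ hfS), fun h => ?_⟩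
      exact heS (hclosed f.1 hfS e.1 f.2 (Prod.mk.eta ▸ hfM) (by rw [← h]; exact Prod.mk.eta ▸ heN))
    · obtain ⟨heM, heS⟩ := Finset.mem_filter.1 he'
      obtain ⟨hfN, hfS⟩ := Finset.mem_filter.1 hf'
      refine ⟨fun h => hfS (h ▸ heS), fun h => ?_⟩
      exact hfS (hclosed e.1 heS f.1 e.2 (Prod.mk.eta ▸ heM) (by rw [h]; exact Prod.mk.eta ▸ hfN))
    · exact hM _ (Finset.mem_filter.1 he').1 _ (Finset.mem_filter.1 hf').1 hne
  · -- IsM M'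
    intro e he f hf hne
    rcases Finset.mem_union.1 he with he' | he' <;> rcases Finset.mem_union.1 hf with hf' | hf'
    · exact hM _ (Finset.mem_filter.1 he').1 _ (Finset.mem_filter.1 hf').1 hne
    · obtain ⟨heM, heS⟩ := Finset.mem_filter.1 he'
      obtain ⟨hfN, hfS⟩ := Finset.mem_filter.1 hf'
      refine ⟨fun h => heS (h ▸ hfS), fun h => ?_⟩
      rcases hpred f.1 hfS f.2 (Prod.mk.eta ▸ hfN) with ⟨p, hpS, hpM⟩ | ⟨hnoM, _⟩
      · have : p = e.1 := IsM.inj2 hM hpM (by rw [← h]; exact Prod.mk.eta ▸ heM)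
        exact heS (this ▸ hpS)
      · exact hnoM e.1 (by rw [← h]; exact Prod.mk.eta ▸ heM)
    · obtain ⟨heN, heS⟩ := Finset.mem_filter.1 he'
      obtain ⟨hfM, hfS⟩ := Finset.mem_filter.1 hf'
      refine ⟨fun h => hfS (h ▸ heS), fun h => ?_⟩
      rcases hpred e.1 heS e.2 (Prod.mk.eta ▸ heN) with ⟨p, hpS, hpM⟩ | ⟨hnoM, _⟩
      · have : p = f.1 := IsM.inj2 hM hpM (by rw [h]; exact Prod.mk.eta ▸ hfM)
        exact hfS (this ▸ hpS)
      · exact hnoM f.1 (by rw [h]; exact Prod.mk.eta ▸ hfM)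
    · exact hN _ (Finset.mem_filter.1 he').1 _ (Finset.mem_filter.1 hf').1 hne
  · -- card N'
    have h1 : Non.card + Noff.card = N.card :=
      Finset.card_filter_add_card_filter_not (s := N) (p := fun e => e.1 ∈ S)
    rw [Finset.card_union_of_disjoint hdis1]
    omega
  · -- card M'
    have h1 : Mon.card + Moff.card = M.card :=
      Finset.card_filter_add_card_filter_not (s := M) (p := fun e => e.1 ∈ S)
    rw [Finset.card_union_of_disjoint hdis2]
    omega
  · -- Q for M'
    intro e he
    rcases Finset.mem_union.1 he with he' | he'
    · exact hQM _ (Finset.mem_filter.1 he').1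
    · obtain ⟨heN, heS⟩ := Finset.mem_filter.1 he'
      rcases hpred e.1 heS e.2 (Prod.mk.eta ▸ heN) with ⟨p, hpS, hpM⟩ | ⟨_, hQ⟩
      · exact hQM (p, e.2) hpM
      · exact hQ
  · -- cost equation
    have h1 : ∑ e ∈ Non, c e + ∑ e ∈ Noff, c e = ∑ e ∈ N, c e :=
      Finset.sum_filter_add_sum_filter_not N (fun e => e.1 ∈ S) c
    have h2 : ∑ e ∈ Mon, c e + ∑ e ∈ Moff, c e = ∑ e ∈ M, c e :=
      Finset.sum_filter_add_sum_filter_not M (fun e => e.1 ∈ S) c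
    rw [Finset.sum_union hdis1, Finset.sum_union hdis2]
    linarith
  · -- old overlap preserved
    intro x hxM hxN
    obtain ⟨e, heN, hex⟩ := Finset.mem_image.1 hxN
    by_cases hxS : x ∈ S
    · obtain ⟨f, hfM, hfx⟩ := Finset.mem_image.1 hxM
      exact Finset.mem_image.2 ⟨f, Finset.mem_union.2 (Or.inr
        (Finset.mem_filter.2 ⟨hfM, hfx ▸ hxS⟩)), hfx⟩
    · exact Finset.mem_image.2 ⟨e, Finset.mem_union.2 (Or.inl
        (Finset.mem_filter.2 ⟨heN, hex ▸ hxS⟩)), hex⟩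
  · -- S ∩ A(M) covered
    intro x hxS hxM
    obtain ⟨f, hfM, hfx⟩ := Finset.mem_image.1 hxM
    exact Finset.mem_image.2 ⟨f, Finset.mem_union.2 (Or.inr
      (Finset.mem_filter.2 ⟨hfM, hfx ▸ hxS⟩)), hfx⟩


end MatchNest

/-- `M` is a `k`-matching: a set of `k` edges of the complete bipartite graph, no two of
which share a vertex. -/
def IsKMatching {A B : Type*} (M : Finset (A × B)) (k : ℕ) : Prop :=
  M.card = k ∧ ∀ e ∈ M, ∀ f ∈ M, e ≠ f → e.1 ≠ f.1 ∧ e.2 ≠ f.2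

open MatchNest in
/-- Nesting: if `M` is a minimum cost `(k-1)`-matching on the subgraph obtained by deleting
the last vertex `b_n` of `B`, then there is a minimum cost `k`-matching `N` on the full
graph matching all vertices of `A` matched by `M`, hence exactly one additional vertex
of `A`. -/
theorem matching_nesting
    (m n k : ℕ) (hk : 1 ≤ k) (hkm : k ≤ m) (hkn : k ≤ n + 1)
    (c : Fin m × Fin (n + 1) → ℝ) (hc : ∀ e, 0 ≤ c e)
    (M : Finset (Fin m × Fin (n + 1)))
    (hM : IsKMatching M (k - 1))
    (hMavoid : ∀ e ∈ M, e.2 ≠ Fin.last n)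
    (hMmin : ∀ M' : Finset (Fin m × Fin (n + 1)),
      IsKMatching M' (k - 1) → (∀ e ∈ M', e.2 ≠ Fin.last n) →
      ∑ e ∈ M, c e ≤ ∑ e ∈ M', c e) :
    ∃ N : Finset (Fin m × Fin (n + 1)), IsKMatching N k ∧
      (∀ N' : Finset (Fin m × Fin (n + 1)), IsKMatching N' k →
        ∑ e ∈ N, c e ≤ ∑ e ∈ N', c e) ∧
      M.image Prod.fst ⊆ N.image Prod.fst ∧
      (N.image Prod.fst \ M.image Prod.fst).card = 1 := by
  classical
  have hMM : IsM M := hM.2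
  -- existence of some k-matching
  have hex : ∃ N₀ : Finset (Fin m × Fin (n + 1)), IsKMatching N₀ k := by
    refine ⟨(Finset.univ : Finset (Fin k)).image
      (fun i => ((Fin.castLE hkm i), (Fin.castLE hkn i))), ?_, ?_⟩
    · rw [Finset.card_image_of_injective _ ?_, Finset.card_univ, Fintype.card_fin]
      intro i j hij
      exact Fin.castLE_injective hkm (congrArg Prod.fst hij)
    · intro e he f hf hne
      obtain ⟨i, _, rfl⟩ := Finset.mem_image.1 he
      obtain ⟨j, _, rfl⟩ := Finset.mem_image.1 hf
      have hij : i ≠ j := fun h => hne (by rw [h])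
      exact ⟨fun h => hij (Fin.castLE_injective hkm h),
        fun h => hij (Fin.castLE_injective hkn h)⟩
  obtain ⟨N₀, hN₀⟩ := hex
  set 𝒞 : Finset (Finset (Fin m × Fin (n + 1))) :=
    Finset.univ.filter (fun N => IsKMatching N k) with h𝒞
  have h𝒞mem : ∀ N, N ∈ 𝒞 ↔ IsKMatching N k := by
    intro N; simp [h𝒞]
  obtain ⟨N₁, hN₁𝒞, hN₁min⟩ := Finset.exists_min_image 𝒞 (fun N => ∑ e ∈ N, c e)
    ⟨N₀, (h𝒞mem N₀).2 hN₀⟩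
  set 𝒟 : Finset (Finset (Fin m × Fin (n + 1))) :=
    𝒞.filter (fun N' => ∑ e ∈ N', c e ≤ ∑ e ∈ N₁, c e) with h𝒟
  obtain ⟨N, hN𝒟, hNmax⟩ := Finset.exists_max_image 𝒟
    (fun N' => ((M.image Prod.fst) ∩ (N'.image Prod.fst)).card)
    ⟨N₁, Finset.mem_filter.2 ⟨hN₁𝒞, le_refl _⟩⟩
  obtain ⟨hN𝒞, hNle⟩ := Finset.mem_filter.1 hN𝒟
  have hNk : IsKMatching N k := (h𝒞mem N).1 hN𝒞
  have hNmin : ∀ N' : Finset (Fin m × Fin (n + 1)), IsKMatching N' k →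
      ∑ e ∈ N, c e ≤ ∑ e ∈ N', c e := by
    intro N' hN'
    exact le_trans hNle (hN₁min N' ((h𝒞mem N').2 hN'))
  have hNM : IsM N := hNk.2
  -- nesting
  have hsubset : M.image Prod.fst ⊆ N.image Prod.fst := by
    by_contra hnots
    obtain ⟨a, haM, haN⟩ := Finset.not_subset.1 hnots
    have hcards : N.card = M.card + 1 := by
      rw [hNk.1, hM.1]; omega
    have hQ1 : ∀ b b' : Fin (n + 1), ¬ (b ≠ Fin.last n) → ¬ (b' ≠ Fin.last n) → b = b' := by
      intro b b' h h'
      push_neg at h h'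
      rw [h, h']
    obtain ⟨S, haS, hclosed, hpred, hcardS⟩ :=
      exists_good_S (Q := fun b => b ≠ Fin.last n) hMM hNM hcards haM haN
        (fun e he => hMavoid e he) hQ1
    obtain ⟨N', M', hN'M, hM'M, hN'card, hM'card, hM'Q, hsum, hold, hnew⟩ :=
      exchange c (fun b => b ≠ Fin.last n) M N S hMM hNM (fun e he => hMavoid e he)
        hclosed hpred hcardS
    have hM'k : IsKMatching M' (k - 1) := ⟨by rw [hM'card, hM.1], hM'M⟩
    have hMcost : ∑ e ∈ M, c e ≤ ∑ e ∈ M', c e := hMmin M' hM'k hM'Q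
    have hN'cost : ∑ e ∈ N', c e ≤ ∑ e ∈ N, c e := by linarith
    have hN'k : IsKMatching N' k := ⟨by rw [hN'card, hNk.1], hN'M⟩
    have hN'𝒟 : N' ∈ 𝒟 := Finset.mem_filter.2 ⟨(h𝒞mem N').2 hN'k, le_trans hN'cost hNle⟩
    have hmono : insert a (M.image Prod.fst ∩ N.image Prod.fst)
        ⊆ M.image Prod.fst ∩ N'.image Prod.fst := by
      intro x hx
      rcases Finset.mem_insert.1 hx with rfl | hx'
      · exact Finset.mem_inter.2 ⟨haM, hnew x haS haM⟩
      · obtain ⟨hx1, hx2⟩ := Finset.mem_inter.1 hx'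
        exact Finset.mem_inter.2 ⟨hx1, hold x hx1 hx2⟩
    have hanotin : a ∉ M.image Prod.fst ∩ N.image Prod.fst := by
      intro h
      exact haN (Finset.mem_inter.1 h).2
    have hcardlt : (M.image Prod.fst ∩ N.image Prod.fst).card
        < (M.image Prod.fst ∩ N'.image Prod.fst).card := by
      calc (M.image Prod.fst ∩ N.image Prod.fst).card
          < (insert a (M.image Prod.fst ∩ N.image Prod.fst)).card := by
            rw [Finset.card_insert_of_notMem hanotin]; omega
        _ ≤ _ := Finset.card_le_card hmono
    exact absurd (hNmax N' hN'𝒟) (by omega)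
  refine ⟨N, hNk, hNmin, hsubset, ?_⟩
  rw [Finset.card_sdiff_of_subset hsubset, hMM.card_image_fst, hNM.card_image_fst, hM.1, hNk.1]
  omega
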